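/- For each fixed r > 1, the map λ ↦ Θ_λ(r) = ∫₁^r [1 − y² + 2λ(y−1)/η_λ(r) + (2 log y)/η_λ(r)²]^{−1/2} dy is (strictly) increasing on [0,∞). -/

import Mathlib

open Real MeasureTheory

noncomputable def thEta (r lam : ℝ) : ℝ :=
  lam / (r + 1) + Real.sqrt (lam ^ 2 / (r + 1) ^ 2 + 2 * Real.log r / (r ^ 2 - 1))

lemma thC_pos {r : ℝ} (hr : 1 < r) : 0 < 2 * Real.log r / (r ^ 2 - 1) := by
  have := Real.log_pos hr
  apply div_pos (by linarith) (by nlinarith)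

lemma thEta_pos {r : ℝ} (hr : 1 < r) {lam : ℝ} (hlam : 0 ≤ lam) : 0 < thEta r lam := by
  have hc := thC_pos hr
  have h1 : 0 < Real.sqrt (lam ^ 2 / (r + 1) ^ 2 + 2 * Real.log r / (r ^ 2 - 1)) :=
    Real.sqrt_pos.2 (by positivity)
  have : 0 ≤ lam / (r + 1) := by positivity
  unfold thEta; linarith

lemma thEta_sq {r : ℝ} (hr : 1 < r) (lam : ℝ) :
    (thEta r lam) ^ 2 = 2 * lam * thEta r lam / (r + 1) + 2 * Real.log r / (r ^ 2 - 1) := by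
  have hc := thC_pos hr
  have hs : Real.sqrt (lam ^ 2 / (r + 1) ^ 2 + 2 * Real.log r / (r ^ 2 - 1)) ^ 2
      = lam ^ 2 / (r + 1) ^ 2 + 2 * Real.log r / (r ^ 2 - 1) := by
    rw [Real.sq_sqrt]; positivity
  rw [show lam ^ 2 / (r + 1) ^ 2 = (lam / (r+1))^2 by rw [div_pow]] at hs
  unfold thEta
  rw [show lam ^ 2 / (r + 1) ^ 2 = (lam / (r+1))^2 by rw [div_pow]]
  linear_combination hs

lemma thEta_mono {r : ℝ} (hr : 1 < r) {a b : ℝ} (ha : 0 ≤ a) (hab : a < b) :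
    thEta r a < thEta r b := by
  have hr1 : (0:ℝ) < r + 1 := by linarith
  unfold thEta
  apply add_lt_add_of_lt_of_le
  · exact div_lt_div_of_pos_right hab hr1
  · apply Real.sqrt_le_sqrt
    have : a ^ 2 ≤ b ^ 2 := by nlinarith
    gcongr

lemma thB_pos {r : ℝ} (hr : 1 < r) {y : ℝ} (hy : y ∈ Set.Ioo 1 r) :
    0 < 2 * Real.log y - 2 * Real.log r * (y - 1) / (r - 1) := by
  obtain ⟨hy1, hyr⟩ := hy
  have hr1 : (0:ℝ) < r - 1 := by linarith
  have key := strictConcaveOn_log_Ioi.2 (Set.mem_Ioi.2 one_pos)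
    (Set.mem_Ioi.2 (by linarith : (0:ℝ) < r)) (by linarith : (1:ℝ) ≠ r)
    (div_pos (by linarith) hr1 : (0:ℝ) < (r - y)/(r - 1))
    (div_pos (by linarith) hr1 : (0:ℝ) < (y - 1)/(r - 1))
    (by field_simp; ring : (r - y)/(r - 1) + (y - 1)/(r - 1) = 1)
  rw [smul_eq_mul, smul_eq_mul, smul_eq_mul, smul_eq_mul, Real.log_one, mul_zero,
    show (r - y)/(r - 1) * 1 + (y - 1)/(r - 1) * r = y by field_simp; ring] at key
  have h2 : 2 * Real.log r * (y - 1) / (r - 1) = 2 * ((y - 1)/(r - 1) * Real.log r) := by ring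
  linarith

lemma thA_eq {r : ℝ} (hr : 1 < r) {lam : ℝ} (hlam : 0 ≤ lam) (y : ℝ) :
    1 - y ^ 2 + 2 * lam * (y - 1) / thEta r lam + 2 * Real.log y / (thEta r lam) ^ 2
      = (y - 1) * (r - y)
        + (2 * Real.log y - 2 * Real.log r * (y - 1) / (r - 1)) / (thEta r lam) ^ 2 := by
  have hE := thEta_pos hr hlam
  have hsq := thEta_sq hr lam
  have h1 : (r:ℝ) - 1 ≠ 0 := by linarith
  have h2 : (r:ℝ) + 1 ≠ 0 := by linarith
  have hE' : thEta r lam ≠ 0 := ne_of_gt hE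
  rw [show r^2 - 1 = (r-1)*(r+1) by ring] at hsq
  field_simp at hsq
  have hsq2 : thEta r lam ^ 2 * ((r-1)*(r+1)) = 2*lam*(thEta r lam)*(r-1) + 2*Real.log r := by
    apply mul_left_cancel₀ h2
    linear_combination (r + 1) * hsq
  field_simp
  linear_combination (-(y-1)) * hsq2

lemma thA_pos {r : ℝ} (hr : 1 < r) {lam : ℝ} (hlam : 0 ≤ lam) {y : ℝ} (hy : y ∈ Set.Ioo 1 r) :
    0 < 1 - y ^ 2 + 2 * lam * (y - 1) / thEta r lam + 2 * Real.log y / (thEta r lam) ^ 2 := by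
  rw [thA_eq hr hlam]
  have hB := thB_pos hr hy
  have hE := thEta_pos hr hlam
  have h1 : 0 < (y - 1) * (r - y) := mul_pos (by linarith [hy.1]) (by linarith [hy.2])
  have h2 : 0 < (2 * Real.log y - 2 * Real.log r * (y - 1) / (r - 1)) / (thEta r lam) ^ 2 :=
    div_pos hB (by positivity)
  linarith

lemma thA_lt {r : ℝ} (hr : 1 < r) {a b : ℝ} (ha : 0 ≤ a) (hab : a < b) {y : ℝ}
    (hy : y ∈ Set.Ioo 1 r) :
    1 - y ^ 2 + 2 * b * (y - 1) / thEta r b + 2 * Real.log y / (thEta r b) ^ 2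
      < 1 - y ^ 2 + 2 * a * (y - 1) / thEta r a + 2 * Real.log y / (thEta r a) ^ 2 := by
  have hb : (0:ℝ) ≤ b := le_trans ha hab.le
  rw [thA_eq hr ha, thA_eq hr hb]
  have hB := thB_pos hr hy
  have hEa := thEta_pos hr ha
  have hEb := thEta_pos hr hb
  have hE := thEta_mono hr ha hab
  have hsq : (thEta r a) ^ 2 < (thEta r b) ^ 2 := by nlinarith
  have := div_lt_div_of_pos_left hB (by positivity : (0:ℝ) < (thEta r a)^2) hsq
  linarith

lemma thF_integrable {r : ℝ} (hr : 1 < r) {lam : ℝ} (hlam : 0 ≤ lam) :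
    IntervalIntegrable (fun y =>
      (1 - y ^ 2 + 2 * lam * (y - 1) / thEta r lam + 2 * Real.log y / (thEta r lam) ^ 2)
        ^ (-(1:ℝ)/2)) volume 1 r := by
  have hp : (-1:ℝ) < -(1:ℝ)/2 := by norm_num
  have hp0 : (-(1:ℝ)/2) ≤ 0 := by norm_num
  have g1 : IntervalIntegrable (fun y : ℝ => (y - 1) ^ (-(1:ℝ)/2)) volume 1 r := by
    have := (intervalIntegral.intervalIntegrable_rpow' (a := 0) (b := r - 1) hp).comp_sub_right 1
    simpa using this
  have g2 : IntervalIntegrable (fun y : ℝ => (r - y) ^ (-(1:ℝ)/2)) volume 1 r := by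
    have := (intervalIntegral.intervalIntegrable_rpow' (a := 0) (b := r - 1) hp).comp_sub_left r
    simpa using this.symm
  set C : ℝ := ((r - 1)/2) ^ (-(1:ℝ)/2) with hC
  have hC0 : 0 ≤ C := Real.rpow_nonneg (by linarith) _
  have hg : IntervalIntegrable (fun y : ℝ => C * ((y - 1) ^ (-(1:ℝ)/2) + (r - y) ^ (-(1:ℝ)/2)))
      volume 1 r := (g1.add g2).const_mul C
  apply hg.mono_fun'
  · have hAcont : ContinuousOn (fun y : ℝ =>
        1 - y ^ 2 + 2 * lam * (y - 1) / thEta r lam + 2 * Real.log y / (thEta r lam) ^ 2)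
        (Set.Ioo 1 r) := by
      apply ContinuousOn.add
      · fun_prop
      · apply ContinuousOn.div_const
        apply ContinuousOn.mul continuousOn_const
        apply Real.continuousOn_log.mono
        intro x hx
        exact ne_of_gt (lt_trans one_pos hx.1)
    have hFcont : ContinuousOn (fun y : ℝ =>
        (1 - y ^ 2 + 2 * lam * (y - 1) / thEta r lam + 2 * Real.log y / (thEta r lam) ^ 2)
          ^ (-(1:ℝ)/2)) (Set.Ioo 1 r) :=
      hAcont.rpow_const (fun x hx => Or.inl (ne_of_gt (thA_pos hr hlam hx)))
    rw [Set.uIoc_of_le hr.le, ← Measure.restrict_congr_set Ioo_ae_eq_Ioc]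
    exact hFcont.aestronglyMeasurable measurableSet_Ioo
  · rw [Set.uIoc_of_le hr.le]
    filter_upwards [MeasureTheory.ae_restrict_mem measurableSet_Ioc] with y hy
    obtain ⟨hy1, hyr⟩ := hy
    set E := thEta r lam with hE
    have hEpos := thEta_pos hr hlam
    rcases eq_or_lt_of_le hyr with hyeq | hylt
    · have hr1 : r - 1 ≠ 0 := by linarith
      have hA0 : 1 - y ^ 2 + 2 * lam * (y - 1) / E + 2 * Real.log y / E ^ 2 = 0 := by
        rw [thA_eq hr hlam, hyeq]
        rw [mul_div_assoc, div_self hr1]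
        ring
      rw [hA0, Real.zero_rpow (by norm_num), Real.norm_eq_abs, abs_zero]
      have n1 := Real.rpow_nonneg (show (0:ℝ) ≤ y - 1 by linarith) (-(1:ℝ)/2)
      have n2 := Real.rpow_nonneg (show (0:ℝ) ≤ r - y by linarith [hyeq.ge]) (-(1:ℝ)/2)
      positivity
    · have hyIoo : y ∈ Set.Ioo 1 r := ⟨hy1, hylt⟩
      have hApos := thA_pos hr hlam hyIoo
      have hbase : 0 < (y - 1) * (r - y) := mul_pos (by linarith) (by linarith)
      have hAge : (y - 1) * (r - y)
          ≤ 1 - y ^ 2 + 2 * lam * (y - 1) / E + 2 * Real.log y / E ^ 2 := by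
        rw [thA_eq hr hlam]
        have hB := thB_pos hr hyIoo
        have : 0 < (2 * Real.log y - 2 * Real.log r * (y - 1) / (r - 1)) / E ^ 2 :=
          div_pos hB (by positivity)
        linarith
      have step1 : (1 - y ^ 2 + 2 * lam * (y - 1) / E + 2 * Real.log y / E ^ 2) ^ (-(1:ℝ)/2)
          ≤ ((y - 1) * (r - y)) ^ (-(1:ℝ)/2) :=
        Real.rpow_le_rpow_of_nonpos hbase hAge hp0
      have step2 : ((y - 1) * (r - y)) ^ (-(1:ℝ)/2)
          = (y - 1) ^ (-(1:ℝ)/2) * (r - y) ^ (-(1:ℝ)/2) :=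
        Real.mul_rpow (by linarith) (by linarith)
      have h1p : (0:ℝ) ≤ (y - 1) ^ (-(1:ℝ)/2) := Real.rpow_nonneg (by linarith) _
      have h2p : (0:ℝ) ≤ (r - y) ^ (-(1:ℝ)/2) := Real.rpow_nonneg (by linarith) _
      have step3 : (y - 1) ^ (-(1:ℝ)/2) * (r - y) ^ (-(1:ℝ)/2)
          ≤ C * ((y - 1) ^ (-(1:ℝ)/2) + (r - y) ^ (-(1:ℝ)/2)) := by
        rcases le_or_gt y ((1 + r)/2) with hhalf | hhalf
        · have hry : (r - 1)/2 ≤ r - y := by linarith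
          have : (r - y) ^ (-(1:ℝ)/2) ≤ C :=
            Real.rpow_le_rpow_of_nonpos (by linarith) hry hp0
          nlinarith
        · have hy1' : (r - 1)/2 ≤ y - 1 := by linarith
          have : (y - 1) ^ (-(1:ℝ)/2) ≤ C :=
            Real.rpow_le_rpow_of_nonpos (by linarith) hy1' hp0
          nlinarith
      rw [Real.norm_eq_abs, abs_of_nonneg (Real.rpow_nonneg hApos.le _)]
      calc (1 - y ^ 2 + 2 * lam * (y - 1) / E + 2 * Real.log y / E ^ 2) ^ (-(1:ℝ)/2)
          ≤ (y - 1) ^ (-(1:ℝ)/2) * (r - y) ^ (-(1:ℝ)/2) := by rw [← step2]; exact step1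
        _ ≤ C * ((y - 1) ^ (-(1:ℝ)/2) + (r - y) ^ (-(1:ℝ)/2)) := step3

/-- For each fixed r > 1, the map λ ↦ Θ_λ(r) is strictly increasing on [0,∞). -/
theorem theta_strictMono_in_lambda (r : ℝ) (hr : 1 < r) :
    StrictMonoOn (fun lam : ℝ =>
        ∫ y in (1:ℝ)..r,
          (1 - y ^ 2 +
              2 * lam * (y - 1) / (lam / (r + 1) +
                Real.sqrt (lam ^ 2 / (r + 1) ^ 2 + 2 * Real.log r / (r ^ 2 - 1))) +
              2 * Real.log y / (lam / (r + 1) +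
                Real.sqrt (lam ^ 2 / (r + 1) ^ 2 + 2 * Real.log r / (r ^ 2 - 1))) ^ 2)
            ^ (-(1:ℝ)/2))
      (Set.Ici (0 : ℝ)) := by
  intro a ha b hb hab
  simp only [Set.mem_Ici] at ha hb
  show (∫ y in (1:ℝ)..r,
      (1 - y ^ 2 + 2 * a * (y - 1) / thEta r a + 2 * Real.log y / (thEta r a) ^ 2) ^ (-(1:ℝ)/2))
    < ∫ y in (1:ℝ)..r,
      (1 - y ^ 2 + 2 * b * (y - 1) / thEta r b + 2 * Real.log y / (thEta r b) ^ 2) ^ (-(1:ℝ)/2)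
  have hFa := thF_integrable hr ha
  have hFb := thF_integrable hr hb
  rw [← sub_pos, ← intervalIntegral.integral_sub hFb hFa]
  apply intervalIntegral.intervalIntegral_pos_of_pos_on (hFb.sub hFa) _ hr
  intro y hy
  have hAb := thA_pos hr hb hy
  have hlt := thA_lt hr ha hab hy
  have key := Real.rpow_lt_rpow_of_neg hAb hlt (by norm_num : -(1:ℝ)/2 < 0)
  exact sub_pos.2 key
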